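/- arXiv:quant-ph/0206123 — 2 statements merged into one kernel-verified Lean document; each statement's English description precedes it below -/
import Mathlib

section
/- For any two density matrices σ₀ and σ₁ on a finite-dimensional complex Hilbert space, and any density matrix σ, the sum of fidelities satisfies F(σ₀, σ) + F(σ₁, σ) ≤ 1 + √(F(σ₀, σ₁)). -/
open Matrix
open scoped ComplexOrder

open scoped Classical in
/-- Square root of a positive semidefinite matrix (0 if not PSD). -/
noncomputable def matSqrt {n : ℕ} (A : Matrix (Fin n) (Fin n) ℂ) : Matrix (Fin n) (Fin n) ℂ :=
  if h : A.PosSemidef then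
    (h.1.eigenvectorUnitary : Matrix (Fin n) (Fin n) ℂ) *
      diagonal ((↑) ∘ Real.sqrt ∘ h.1.eigenvalues) *
      (star h.1.eigenvectorUnitary : Matrix (Fin n) (Fin n) ℂ)
  else 0

/-- Fidelity F(ρ,σ) = (Tr √(√ρ σ √ρ))². -/
noncomputable def fidelity {n : ℕ} (ρ σ : Matrix (Fin n) (Fin n) ℂ) : ℝ :=
  ((matSqrt (matSqrt ρ * σ * matSqrt ρ)).trace.re) ^ 2

/-- Trace norm ‖A‖_tr = Tr √(Aᴴ A). -/
noncomputable def traceNorm {n : ℕ} (A : Matrix (Fin n) (Fin n) ℂ) : ℝ :=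
  (matSqrt (Aᴴ * A)).trace.re

/-- A density matrix: positive semidefinite with unit trace. -/
def IsDensityMatrix {n : ℕ} (ρ : Matrix (Fin n) (Fin n) ℂ) : Prop :=
  ρ.PosSemidef ∧ ρ.trace = 1

variable {n : ℕ}

lemma psd_trace_eq {A : Matrix (Fin n) (Fin n) ℂ} (h : A.PosSemidef) :
    A.trace = (A.trace.re : ℂ) := by
  have hdiag : ∀ i, A i i = ((A i i).re : ℂ) := by
    intro i
    have := congrFun (congrFun h.isHermitian i) i
    rw [conjTranspose_apply] at this
    exact (Complex.conj_eq_iff_re.mp this).symm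
  rw [Matrix.trace]
  simp only [Matrix.diag]
  rw [Finset.sum_congr rfl (fun i _ => hdiag i)]
  simp [Complex.ofReal_re]

lemma psd_trace_re_nonneg {A : Matrix (Fin n) (Fin n) ℂ} (h : A.PosSemidef) :
    0 ≤ A.trace.re := by
  have : ∀ i, 0 ≤ (A i i).re := by
    intro i
    have := h.re_dotProduct_nonneg (Pi.single i 1)
    simpa [dotProduct, Matrix.mulVec, Pi.single_apply, Finset.sum_ite_eq,
      Finset.mul_sum] using this
  rw [Matrix.trace]
  simp only [Matrix.diag, Complex.re_sum]
  exact Finset.sum_nonneg fun i _ => this i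

lemma trace_CS (X Y : Matrix (Fin n) (Fin n) ℂ) :
    ‖(Xᴴ * Y).trace‖ ≤ Real.sqrt ((Xᴴ * X).trace.re) * Real.sqrt ((Yᴴ * Y).trace.re) := by
  classical
  let x : EuclideanSpace ℂ (Fin n × Fin n) := WithLp.toLp 2 fun p : Fin n × Fin n => X p.1 p.2
  let y : EuclideanSpace ℂ (Fin n × Fin n) := WithLp.toLp 2 fun p : Fin n × Fin n => Y p.1 p.2
  have key : ∀ (P Q : Matrix (Fin n) (Fin n) ℂ),
      (Pᴴ * Q).trace = @inner ℂ (EuclideanSpace ℂ (Fin n × Fin n)) _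
        (WithLp.toLp 2 fun p : Fin n × Fin n => P p.1 p.2)
        (WithLp.toLp 2 fun p : Fin n × Fin n => Q p.1 p.2) := by
    intro P Q
    rw [PiLp.inner_apply]
    rw [Matrix.trace]
    simp only [Matrix.diag, Matrix.mul_apply, conjTranspose_apply, RCLike.inner_apply,
      PiLp.toLp_apply]
    rw [Fintype.sum_prod_type]
    rw [Finset.sum_comm]
    refine Finset.sum_congr rfl fun _ _ => Finset.sum_congr rfl fun _ _ => ?_
    simp only [Complex.star_def]
    ring
  have h1 : (Xᴴ * Y).trace = inner ℂ x y := key X Y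
  have h2 : (Xᴴ * X).trace.re = ‖x‖ ^ 2 := by
    rw [key X X, ← inner_self_eq_norm_sq (𝕜 := ℂ)]
    rfl
  have h3 : (Yᴴ * Y).trace.re = ‖y‖ ^ 2 := by
    rw [key Y Y, ← inner_self_eq_norm_sq (𝕜 := ℂ)]
    rfl
  rw [h1, h2, h3, Real.sqrt_sq (norm_nonneg _), Real.sqrt_sq (norm_nonneg _)]
  exact norm_inner_le_norm x y

lemma toEuclideanLin_mul (M N : Matrix (Fin n) (Fin n) ℂ) (x : EuclideanSpace ℂ (Fin n)) :
    Matrix.toEuclideanLin (M * N) x = Matrix.toEuclideanLin M (Matrix.toEuclideanLin N x) := by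
  simp [Matrix.toEuclideanLin_apply, Matrix.mulVec_mulVec]

lemma matSqrt_posSemidef' {A : Matrix (Fin n) (Fin n) ℂ} (h : A.PosSemidef) :
    (matSqrt A).PosSemidef := by
  rw [matSqrt, dif_pos h]
  apply PosSemidef.mul_mul_conjTranspose_same
  rw [posSemidef_diagonal_iff]
  intro i
  simp only [Function.comp_apply]
  exact Complex.zero_le_real.mpr (Real.sqrt_nonneg _)

lemma matSqrt_mul_self' {A : Matrix (Fin n) (Fin n) ℂ} (h : A.PosSemidef) :
    matSqrt A * matSqrt A = A := by
  rw [matSqrt, dif_pos h]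
  conv_rhs => rw [h.1.spectral_theorem, Unitary.conjStarAlgAut_apply]
  have hu : (star h.1.eigenvectorUnitary : Matrix (Fin n) (Fin n) ℂ) *
      (h.1.eigenvectorUnitary : Matrix (Fin n) (Fin n) ℂ) = 1 := Unitary.coe_star_mul_self _
  simp only [Matrix.mul_assoc]
  rw [← Matrix.mul_assoc (star (h.1.eigenvectorUnitary : Matrix (Fin n) (Fin n) ℂ)), hu,
    Matrix.one_mul, ← Matrix.mul_assoc (diagonal _), diagonal_mul_diagonal]
  congr 3
  funext i
  simp only [Function.comp_apply]
  rw [← Complex.ofReal_mul, Real.mul_self_sqrt (h.eigenvalues_nonneg i)]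
  rfl

lemma exists_polar (A : Matrix (Fin n) (Fin n) ℂ) :
    ∃ U : Matrix (Fin n) (Fin n) ℂ, Uᴴ * U = 1 ∧
      A = U * matSqrt (Aᴴ * A) := by
  classical
  have hAA : (Aᴴ * A).PosSemidef := Matrix.posSemidef_conjTranspose_mul_self A
  have hmS : matSqrt (Aᴴ * A) = matSqrt (Aᴴ * A) := rfl
  set P : Matrix (Fin n) (Fin n) ℂ := matSqrt (Aᴴ * A) with hP
  have hPsd : P.PosSemidef := matSqrt_posSemidef' hAA
  have hPH : Pᴴ = P := hPsd.isHermitian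
  have hPP : P * P = Aᴴ * A := matSqrt_mul_self' hAA
  set f : EuclideanSpace ℂ (Fin n) →ₗ[ℂ] EuclideanSpace ℂ (Fin n) := Matrix.toEuclideanLin A with hf
  set p : EuclideanSpace ℂ (Fin n) →ₗ[ℂ] EuclideanSpace ℂ (Fin n) := Matrix.toEuclideanLin P with hp
  have hinner : ∀ x : EuclideanSpace ℂ (Fin n),
      inner ℂ (f x) (f x) = inner ℂ (p x) (p x) := by
    intro x
    have e1 : inner ℂ (f x) (f x) = inner ℂ x (Matrix.toEuclideanLin (Aᴴ * A) x) := by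
      rw [toEuclideanLin_mul, Matrix.toEuclideanLin_conjTranspose_eq_adjoint,
        LinearMap.adjoint_inner_right]
    have e2 : inner ℂ (p x) (p x) = inner ℂ x (Matrix.toEuclideanLin (Pᴴ * P) x) := by
      rw [toEuclideanLin_mul, Matrix.toEuclideanLin_conjTranspose_eq_adjoint,
        LinearMap.adjoint_inner_right]
    rw [e1, e2, hPH, hPP]
  have hnorm : ∀ x : EuclideanSpace ℂ (Fin n), ‖f x‖ = ‖p x‖ := by
    intro x
    have h2 : ‖f x‖ ^ 2 = ‖p x‖ ^ 2 := by
      rw [← inner_self_eq_norm_sq (𝕜 := ℂ), ← inner_self_eq_norm_sq (𝕜 := ℂ), hinner x]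
    have := congrArg Real.sqrt h2
    simpa [Real.sqrt_sq, norm_nonneg] using this
  have hker : LinearMap.ker p ≤ LinearMap.ker f := by
    intro x hx
    rw [LinearMap.mem_ker] at hx ⊢
    have := hnorm x
    rw [hx, norm_zero, norm_eq_zero] at this
    exact this
  -- the isometry on the range of p
  let g : (EuclideanSpace ℂ (Fin n) ⧸ LinearMap.ker p) →ₗ[ℂ] EuclideanSpace ℂ (Fin n) :=
    (LinearMap.ker p).liftQ f hker
  let ℓ : LinearMap.range p →ₗ[ℂ] EuclideanSpace ℂ (Fin n) :=
    g ∘ₗ (p.quotKerEquivRange.symm : LinearMap.range p →ₗ[ℂ] _)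
  have hℓ : ∀ (x : EuclideanSpace ℂ (Fin n)) (hx : p x ∈ LinearMap.range p),
      ℓ ⟨p x, hx⟩ = f x := by
    intro x hx
    show g (p.quotKerEquivRange.symm ⟨p x, hx⟩) = f x
    rw [LinearMap.quotKerEquivRange_symm_apply_image]
    simp [g, Submodule.liftQ_apply]
  have hℓ_norm : ∀ s : LinearMap.range p, ‖ℓ s‖ = ‖s‖ := by
    rintro ⟨-, x, rfl⟩
    rw [hℓ x (LinearMap.mem_range_self p x)]
    rw [hnorm x]
    rfl
  let L : LinearMap.range p →ₗᵢ[ℂ] EuclideanSpace ℂ (Fin n) := ⟨ℓ, hℓ_norm⟩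
  let Lex : EuclideanSpace ℂ (Fin n) →ₗᵢ[ℂ] EuclideanSpace ℂ (Fin n) := L.extend
  have hLex : ∀ x : EuclideanSpace ℂ (Fin n), Lex (p x) = f x := by
    intro x
    have : Lex ((⟨p x, LinearMap.mem_range_self p x⟩ : LinearMap.range p) :
        EuclideanSpace ℂ (Fin n)) = L ⟨p x, LinearMap.mem_range_self p x⟩ :=
      L.extend_apply _
    rw [this]
    exact hℓ x (LinearMap.mem_range_self p x)
  let U : Matrix (Fin n) (Fin n) ℂ := Matrix.toEuclideanLin.symm Lex.toLinearMap
  have hU : Matrix.toEuclideanLin U = Lex.toLinearMap := by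
    simp [U]
  refine ⟨U, ?_, ?_⟩
  · apply Matrix.toEuclideanLin.injective
    apply LinearMap.ext
    intro x
    rw [toEuclideanLin_mul, Matrix.toEuclideanLin_conjTranspose_eq_adjoint, hU]
    apply ext_inner_left ℂ
    intro y
    rw [LinearMap.adjoint_inner_right]
    have : inner ℂ (Lex.toLinearMap y) (Lex.toLinearMap x) = inner ℂ y x :=
      Lex.inner_map_map y x
    rw [this]
    congr 1
    simp [Matrix.toEuclideanLin_apply, Matrix.one_mulVec]
  · rw [hmS]
    apply Matrix.toEuclideanLin.injective
    apply LinearMap.ext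
    intro x
    rw [toEuclideanLin_mul, hU]
    exact (hLex x).symm

lemma matSqrt_posSemidef {A : Matrix (Fin n) (Fin n) ℂ} (h : A.PosSemidef) :
    (matSqrt A).PosSemidef := by
  exact matSqrt_posSemidef' h

lemma matSqrt_mul_self {A : Matrix (Fin n) (Fin n) ℂ} (h : A.PosSemidef) :
    matSqrt A * matSqrt A = A := by
  exact matSqrt_mul_self' h

lemma matSqrt_herm {A : Matrix (Fin n) (Fin n) ℂ} (h : A.PosSemidef) :
    (matSqrt A)ᴴ = matSqrt A := (matSqrt_posSemidef h).isHermitian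

lemma trace_conj_unitary (W M : Matrix (Fin n) (Fin n) ℂ) (hW : W * Wᴴ = 1) :
    (Wᴴ * M * W).trace = M.trace := by
  rw [Matrix.trace_mul_comm, ← Matrix.mul_assoc, hW, Matrix.one_mul]

/-- achieving unitary for the trace norm of `C`, in the form `C = P * W`. -/
lemma exists_left_polar (C : Matrix (Fin n) (Fin n) ℂ) :
    ∃ W : Matrix (Fin n) (Fin n) ℂ, Wᴴ * W = 1 ∧ W * Wᴴ = 1 ∧
      C = matSqrt (C * Cᴴ) * W := by
  obtain ⟨V, hV, hCP⟩ := exists_polar Cᴴ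
  rw [conjTranspose_conjTranspose] at hCP
  refine ⟨Vᴴ, by rw [conjTranspose_conjTranspose]; exact mul_eq_one_comm.mp hV,
    by rw [conjTranspose_conjTranspose]; exact hV, ?_⟩
  have := congrArg conjTranspose hCP
  rw [conjTranspose_conjTranspose, conjTranspose_mul,
    matSqrt_herm (Matrix.posSemidef_self_mul_conjTranspose C)] at this
  exact this

set_option maxHeartbeats 1000000 in
theorem fidelity_sum_le {n : ℕ} (σ₀ σ₁ σ : Matrix (Fin n) (Fin n) ℂ)
    (h₀ : IsDensityMatrix σ₀) (h₁ : IsDensityMatrix σ₁) (h : IsDensityMatrix σ) :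
    fidelity σ₀ σ + fidelity σ₁ σ ≤ 1 + Real.sqrt (fidelity σ₀ σ₁) := by
  obtain ⟨hσ₀, ht₀⟩ := h₀
  obtain ⟨hσ₁, ht₁⟩ := h₁
  obtain ⟨hσ, ht⟩ := h
  set r : Matrix (Fin n) (Fin n) ℂ := matSqrt σ with hr
  set r₀ : Matrix (Fin n) (Fin n) ℂ := matSqrt σ₀ with hr0
  set r₁ : Matrix (Fin n) (Fin n) ℂ := matSqrt σ₁ with hr1
  set C₀ : Matrix (Fin n) (Fin n) ℂ := r₀ * r with hC0
  set C₁ : Matrix (Fin n) (Fin n) ℂ := r₁ * r with hC1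
  set E : Matrix (Fin n) (Fin n) ℂ := r₁ * r₀ with hE
  -- rewrite the fidelities
  have hCCH : ∀ (ρ : Matrix (Fin n) (Fin n) ℂ) (hρ : ρ.PosSemidef)
      (τ : Matrix (Fin n) (Fin n) ℂ) (hτ : τ.PosSemidef),
      matSqrt ρ * τ * matSqrt ρ = (matSqrt ρ * matSqrt τ) * (matSqrt ρ * matSqrt τ)ᴴ := by
    intro ρ hρ τ hτ
    rw [conjTranspose_mul, matSqrt_herm hρ, matSqrt_herm hτ]
    rw [show matSqrt ρ * matSqrt τ * (matSqrt τ * matSqrt ρ)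
        = matSqrt ρ * (matSqrt τ * matSqrt τ) * matSqrt ρ by noncomm_ring,
      matSqrt_mul_self hτ]
  have hfid0 : fidelity σ₀ σ = ((matSqrt (C₀ * C₀ᴴ)).trace.re) ^ 2 := by
    rw [fidelity, ← hCCH σ₀ hσ₀ σ hσ]
  have hfid1 : fidelity σ₁ σ = ((matSqrt (C₁ * C₁ᴴ)).trace.re) ^ 2 := by
    rw [fidelity, ← hCCH σ₁ hσ₁ σ hσ]
  have hEHE : Eᴴ * E = r₀ * σ₁ * r₀ := by
    rw [hE, conjTranspose_mul, matSqrt_herm hσ₀, matSqrt_herm hσ₁]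
    rw [show r₀ * r₁ * (r₁ * r₀) = r₀ * (r₁ * r₁) * r₀ by noncomm_ring, matSqrt_mul_self hσ₁]
  have hfid01 : fidelity σ₀ σ₁ = ((matSqrt (Eᴴ * E)).trace.re) ^ 2 := by
    rw [fidelity, hEHE]
  -- polar decompositions
  obtain ⟨W₀, hW₀l, hW₀r, hC₀⟩ := exists_left_polar C₀
  obtain ⟨W₁, hW₁l, hW₁r, hC₁⟩ := exists_left_polar C₁
  obtain ⟨V, hVl, hVr, hEpol⟩ := exists_left_polar Eᴴ
  rw [conjTranspose_conjTranspose] at hEpol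
  set P₀ : Matrix (Fin n) (Fin n) ℂ := matSqrt (C₀ * C₀ᴴ) with hP0
  set P₁ : Matrix (Fin n) (Fin n) ℂ := matSqrt (C₁ * C₁ᴴ) with hP1
  set Q : Matrix (Fin n) (Fin n) ℂ := matSqrt (Eᴴ * E) with hQ
  have hP₀sd : P₀.PosSemidef := matSqrt_posSemidef (Matrix.posSemidef_self_mul_conjTranspose C₀)
  have hP₁sd : P₁.PosSemidef := matSqrt_posSemidef (Matrix.posSemidef_self_mul_conjTranspose C₁)
  have hQsd : Q.PosSemidef := matSqrt_posSemidef (Matrix.posSemidef_conjTranspose_mul_self E)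
  set a₀ : ℝ := P₀.trace.re with ha0
  set a₁ : ℝ := P₁.trace.re with ha1
  set c : ℝ := Q.trace.re with hc
  have ha₀nn : 0 ≤ a₀ := psd_trace_re_nonneg hP₀sd
  have ha₁nn : 0 ≤ a₁ := psd_trace_re_nonneg hP₁sd
  have hcnn : 0 ≤ c := psd_trace_re_nonneg hQsd
  -- purification vectors
  set ψ₀ : Matrix (Fin n) (Fin n) ℂ := r₀ * W₀ with hψ0
  set ψ₁ : Matrix (Fin n) (Fin n) ℂ := r₁ * W₁ with hψ1
  -- inner products with φ = r
  have hover : ∀ (ρ : Matrix (Fin n) (Fin n) ℂ) (hρ : ρ.PosSemidef)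
      (W P : Matrix (Fin n) (Fin n) ℂ) (hWr : W * Wᴴ = 1)
      (hCP : matSqrt ρ * r = P * W),
      ((matSqrt ρ * W)ᴴ * r).trace = P.trace := by
    intro ρ hρ W P hWr hCP
    rw [conjTranspose_mul, matSqrt_herm hρ, Matrix.mul_assoc, hCP,
      ← Matrix.mul_assoc, Matrix.trace_mul_comm, ← Matrix.mul_assoc, hWr, Matrix.one_mul]
  have ht₀' : (ψ₀ᴴ * r).trace = (a₀ : ℂ) := by
    rw [hψ0, hover σ₀ hσ₀ W₀ P₀ hW₀r hC₀, ← psd_trace_eq hP₀sd]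
  have ht₁' : (ψ₁ᴴ * r).trace = (a₁ : ℂ) := by
    rw [hψ1, hover σ₁ hσ₁ W₁ P₁ hW₁r hC₁, ← psd_trace_eq hP₁sd]
  -- norms
  have hnψ : ∀ (ρ : Matrix (Fin n) (Fin n) ℂ) (hρ : ρ.PosSemidef) (htρ : ρ.trace = 1)
      (W : Matrix (Fin n) (Fin n) ℂ) (hWr : W * Wᴴ = 1),
      ((matSqrt ρ * W)ᴴ * (matSqrt ρ * W)).trace = 1 := by
    intro ρ hρ htρ W hWr
    rw [conjTranspose_mul, matSqrt_herm hρ]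
    rw [show Wᴴ * matSqrt ρ * (matSqrt ρ * W) = Wᴴ * (matSqrt ρ * matSqrt ρ) * W by
      noncomm_ring, matSqrt_mul_self hρ, trace_conj_unitary W ρ hWr, htρ]
  have hnψ₀ : (ψ₀ᴴ * ψ₀).trace = 1 := hnψ σ₀ hσ₀ ht₀ W₀ hW₀r
  have hnψ₁ : (ψ₁ᴴ * ψ₁).trace = 1 := hnψ σ₁ hσ₁ ht₁ W₁ hW₁r
  have hnφ : (rᴴ * r).trace = 1 := by
    rw [matSqrt_herm hσ, matSqrt_mul_self hσ, ht]
  -- cross term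
  have hr₀r₁ : r₀ * r₁ = Eᴴ := by
    rw [hE, conjTranspose_mul, matSqrt_herm hσ₀, matSqrt_herm hσ₁]
  set G : Matrix (Fin n) (Fin n) ℂ := matSqrt Q with hG
  have hGH : Gᴴ = G := matSqrt_herm hQsd
  have hGG : G * G = Q := matSqrt_mul_self hQsd
  set M : Matrix (Fin n) (Fin n) ℂ := V * (W₁ * W₀ᴴ) with hM
  have hNN : (W₁ * W₀ᴴ) * (W₁ * W₀ᴴ)ᴴ = 1 := by
    rw [conjTranspose_mul, conjTranspose_conjTranspose,
      show W₁ * W₀ᴴ * (W₀ * W₁ᴴ) = W₁ * (W₀ᴴ * W₀) * W₁ᴴ by noncomm_ring, hW₀l,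
      Matrix.mul_one, hW₁r]
  have hMMH : M * Mᴴ = 1 := by
    rw [hM, conjTranspose_mul,
      show V * (W₁ * W₀ᴴ) * ((W₁ * W₀ᴴ)ᴴ * Vᴴ) = V * ((W₁ * W₀ᴴ) * (W₁ * W₀ᴴ)ᴴ) * Vᴴ by
        noncomm_ring, hNN, Matrix.mul_one, hVr]
  have hXX : (Mᴴ * G)ᴴ * (Mᴴ * G) = Q := by
    rw [conjTranspose_mul, conjTranspose_conjTranspose, hGH,
      show G * M * (Mᴴ * G) = G * (M * Mᴴ) * G by noncomm_ring, hMMH, Matrix.mul_one, hGG]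
  have he2 : (ψ₀ᴴ * ψ₁).trace = ((Mᴴ * G)ᴴ * G).trace := by
    have he1 : ψ₀ᴴ * ψ₁ = W₀ᴴ * (Q * V * W₁) := by
      rw [hψ0, hψ1, conjTranspose_mul, matSqrt_herm hσ₀,
        show W₀ᴴ * r₀ * (r₁ * W₁) = W₀ᴴ * ((r₀ * r₁) * W₁) by noncomm_ring, hr₀r₁, hEpol]
    calc (ψ₀ᴴ * ψ₁).trace = ((Q * V * W₁) * W₀ᴴ).trace := by
          rw [he1]; exact Matrix.trace_mul_comm _ _
    _ = (G * ((G * M))).trace := by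
          exact congrArg Matrix.trace (by rw [hM, ← hGG]; noncomm_ring)
    _ = ((G * M) * G).trace := Matrix.trace_mul_comm _ _
    _ = ((Mᴴ * G)ᴴ * G).trace := by
          rw [conjTranspose_mul, conjTranspose_conjTranspose, hGH]
  have hcross : ‖(ψ₀ᴴ * ψ₁).trace‖ ≤ c := by
    have hCS := trace_CS (Mᴴ * G) G
    rw [hXX] at hCS
    rw [show Gᴴ * G = Q by rw [hGH, hGG]] at hCS
    rw [he2]
    calc ‖((Mᴴ * G)ᴴ * G).trace‖ ≤ Real.sqrt Q.trace.re * Real.sqrt Q.trace.re := hCS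
    _ = c := Real.mul_self_sqrt hcnn
  -- the combined vector
  set v : Matrix (Fin n) (Fin n) ℂ := (a₀ : ℂ) • ψ₀ + (a₁ : ℂ) • ψ₁ with hv
  set s : ℝ := a₀ ^ 2 + a₁ ^ 2 with hs
  have hvr : (vᴴ * r).trace = ((s : ℝ) : ℂ) := by
    rw [hv, conjTranspose_add, conjTranspose_smul, conjTranspose_smul, add_mul,
      smul_mul_assoc, smul_mul_assoc, Matrix.trace_add, Matrix.trace_smul,
      Matrix.trace_smul, ht₀', ht₁', hs]
    simp only [smul_eq_mul, Complex.star_def, Complex.conj_ofReal]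
    push_cast
    ring
  have hψ₁₀ : (ψ₁ᴴ * ψ₀).trace = star (ψ₀ᴴ * ψ₁).trace := by
    have hco : (ψ₀ᴴ * ψ₁)ᴴ = ψ₁ᴴ * ψ₀ := by
      rw [conjTranspose_mul, conjTranspose_conjTranspose]
    rw [← hco, Matrix.trace_conjTranspose]
  have hvv : (vᴴ * v).trace
      = ((s : ℝ) : ℂ) + ((a₀ * a₁ : ℝ) : ℂ) * ((ψ₀ᴴ * ψ₁).trace + star (ψ₀ᴴ * ψ₁).trace) := by
    rw [hv, conjTranspose_add, conjTranspose_smul, conjTranspose_smul]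
    simp only [add_mul, mul_add, smul_mul_assoc, Matrix.mul_smul, Matrix.trace_add,
      Matrix.trace_smul, smul_smul, smul_eq_mul, hnψ₀, hnψ₁, hψ₁₀, hs]
    simp only [Complex.star_def, Complex.conj_ofReal, mul_one]
    push_cast
    ring
  have hvvre : (vᴴ * v).trace.re ≤ s * (1 + c) := by
    rw [hvv]
    have h2re : ((ψ₀ᴴ * ψ₁).trace + star (ψ₀ᴴ * ψ₁).trace) = (2 * (ψ₀ᴴ * ψ₁).trace.re : ℝ) := by
      rw [Complex.star_def, Complex.add_conj]
    rw [h2re]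
    have : (((s : ℝ) : ℂ) + ((a₀ * a₁ : ℝ) : ℂ) * ((2 * (ψ₀ᴴ * ψ₁).trace.re : ℝ) : ℂ)).re
        = s + (a₀ * a₁) * (2 * (ψ₀ᴴ * ψ₁).trace.re) := by
      norm_cast
    rw [this]
    have hre_le : (ψ₀ᴴ * ψ₁).trace.re ≤ c :=
      le_trans (Complex.re_le_norm _) hcross
    have hb1 : 2 * (a₀ * a₁) * (ψ₀ᴴ * ψ₁).trace.re ≤ 2 * (a₀ * a₁) * c :=
      mul_le_mul_of_nonneg_left hre_le (by nlinarith [mul_nonneg ha₀nn ha₁nn])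
    have hb2 : 2 * (a₀ * a₁) * c ≤ (a₀ ^ 2 + a₁ ^ 2) * c :=
      mul_le_mul_of_nonneg_right (by nlinarith [sq_nonneg (a₀ - a₁)]) hcnn
    rw [hs]
    nlinarith [hb1, hb2]
  have hsnn : 0 ≤ s := by
    rw [hs]; exact add_nonneg (sq_nonneg _) (sq_nonneg _)
  have hCSfin := trace_CS v r
  rw [hvr, hnφ] at hCSfin
  have hstep : s ≤ Real.sqrt ((vᴴ * v).trace.re) := by
    have : ‖((s : ℝ) : ℂ)‖ = s := by
      rw [Complex.norm_real, Real.norm_eq_abs, abs_of_nonneg hsnn]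
    rw [this] at hCSfin
    simpa using hCSfin
  have hsq : s ^ 2 ≤ s * (1 + c) := by
    have h1 : Real.sqrt ((vᴴ * v).trace.re) ≤ Real.sqrt (s * (1 + c)) :=
      Real.sqrt_le_sqrt hvvre
    have h2 : s ≤ Real.sqrt (s * (1 + c)) := le_trans hstep h1
    have h4 := pow_le_pow_left₀ hsnn h2 2
    rwa [Real.sq_sqrt (by nlinarith : (0:ℝ) ≤ s * (1 + c))] at h4
  have hfin : s ≤ 1 + c := by
    nlinarith [hsnn, hcnn]
  calc fidelity σ₀ σ + fidelity σ₁ σ = s := by rw [hfid0, hfid1, hs, ha0, ha1]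
  _ ≤ 1 + c := hfin
  _ = 1 + Real.sqrt (fidelity σ₀ σ₁) := by rw [hfid01, hc, Real.sqrt_sq hcnn]
end

section
/- For all real α and β with cos(α/2) ≠ 0 or sin(α/2) ≠ 0, define λ = sin²(α/2) / ((1 + sin²(β/2))·cos²(α/2) + sin²(α/2)). Then (√(((1-λ)/2)·(1 + sin²(β/2))) · cos(α/2) + √(λ/2) · sin(α/2))² = (1/2)·(1 + cos²(α/2)·sin²(β/2)), provided cos(α/2) ≥ 0 and sin(α/2) ≥ 0. -/
lemma alice_key (c s t : ℝ) (ht : 0 ≤ t) (hc : 0 ≤ c) (hs : 0 ≤ s)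
    (hpyth : s ^ 2 + c ^ 2 = 1) :
    (Real.sqrt (((1 - s ^ 2 / ((1 + t) * c ^ 2 + s ^ 2)) / 2) * (1 + t)) * c +
        Real.sqrt ((s ^ 2 / ((1 + t) * c ^ 2 + s ^ 2)) / 2) * s) ^ 2 =
      (1 / 2) * (1 + c ^ 2 * t) := by
  rw [show (1 + t) * c ^ 2 + s ^ 2 = 1 + t * c ^ 2 by linear_combination hpyth]
  generalize hD : 1 + t * c ^ 2 = D
  have hDpos : 0 < D := by rw [← hD]; nlinarith [sq_nonneg c]
  have hE : (1 + t) * c ^ 2 + s ^ 2 = D := by linear_combination hpyth + hD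
  have h1l : 1 - s ^ 2 / D = (1 + t) * c ^ 2 / D := by
    field_simp
    linear_combination (-1) * hE
  have hXval : ((1 - s ^ 2 / D) / 2) * (1 + t) = (1 + t) ^ 2 * c ^ 2 / (2 * D) := by
    rw [h1l]; ring
  have hYval : (s ^ 2 / D) / 2 = s ^ 2 / (2 * D) := by ring
  rw [hXval, hYval]
  have hXnn : (0:ℝ) ≤ (1 + t) ^ 2 * c ^ 2 / (2 * D) := by positivity
  have hYnn : (0:ℝ) ≤ s ^ 2 / (2 * D) := by positivity
  have hXY : ((1 + t) ^ 2 * c ^ 2 / (2 * D)) * (s ^ 2 / (2 * D))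
      = ((1 + t) * c * s / (2 * D)) ^ 2 := by
    field_simp
  have hsqrtXY : Real.sqrt ((1 + t) ^ 2 * c ^ 2 / (2 * D)) * Real.sqrt (s ^ 2 / (2 * D))
      = (1 + t) * c * s / (2 * D) := by
    rw [← Real.sqrt_mul hXnn, hXY, Real.sqrt_sq (by positivity)]
  have hx2 : Real.sqrt ((1 + t) ^ 2 * c ^ 2 / (2 * D)) ^ 2
      = (1 + t) ^ 2 * c ^ 2 / (2 * D) := Real.sq_sqrt hXnn
  have hy2 : Real.sqrt (s ^ 2 / (2 * D)) ^ 2 = s ^ 2 / (2 * D) := Real.sq_sqrt hYnn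
  have expand : (Real.sqrt ((1 + t) ^ 2 * c ^ 2 / (2 * D)) * c
        + Real.sqrt (s ^ 2 / (2 * D)) * s) ^ 2
      = ((1 + t) ^ 2 * c ^ 2 / (2 * D)) * c ^ 2
        + 2 * (Real.sqrt ((1 + t) ^ 2 * c ^ 2 / (2 * D)) * Real.sqrt (s ^ 2 / (2 * D)))
          * (c * s) + (s ^ 2 / (2 * D)) * s ^ 2 := by
    nlinarith [hx2, hy2]
  rw [expand, hsqrtXY]
  field_simp
  linear_combination ((1 + t) * c ^ 2 + s ^ 2 + D) * hE - D * hD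

theorem alice_five_round_success (α β : ℝ)
    (hne : Real.cos (α / 2) ≠ 0 ∨ Real.sin (α / 2) ≠ 0)
    (hc : Real.cos (α / 2) ≥ 0) (hs : Real.sin (α / 2) ≥ 0) :
    let l := Real.sin (α / 2) ^ 2 /
      ((1 + Real.sin (β / 2) ^ 2) * Real.cos (α / 2) ^ 2 + Real.sin (α / 2) ^ 2)
    (Real.sqrt (((1 - l) / 2) * (1 + Real.sin (β / 2) ^ 2)) * Real.cos (α / 2) +
        Real.sqrt (l / 2) * Real.sin (α / 2)) ^ 2 =
      (1 / 2) * (1 + Real.cos (α / 2) ^ 2 * Real.sin (β / 2) ^ 2) := by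
  exact alice_key (Real.cos (α / 2)) (Real.sin (α / 2)) (Real.sin (β / 2) ^ 2)
    (sq_nonneg _) hc hs (Real.sin_sq_add_cos_sq _)
end
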